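/- arXiv:1004.1783 — 4 statements merged into one kernel-verified Lean document; each statement's English description precedes it below -/
import Mathlib

section
/- Let n ≥ 1 be an integer and suppose P is analytic near z=1 with P(2)=1, satisfying P(z+1) = 2^{−n} P(2z) + (2^{n+1}−2)·2^{−(n+1)} P(2/z) z^{n−1} for all z near 1. Then P'(2) = (2^n − 1)(n−1)/(3·2^n − 4). -/
/-- If `P` is analytic (near `1` and near `2`), `P 2 = 1`, and
`P(z+1) = 2^{-n} P(2z) + (2^{n+1}−2) 2^{-(n+1)} P(2/z) z^{n-1}` for all `z` near `1`,
then `P'(2) = (2^n − 1)(n − 1)/(3·2^n − 4)`. -/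
theorem deriv_P_at_two (n : ℕ) (hn : 1 ≤ n) (P : ℂ → ℂ)
    (hP1 : AnalyticAt ℂ P 1) (hP2an : AnalyticAt ℂ P 2) (hP2 : P 2 = 1)
    (heq : ∀ᶠ z in nhds (1 : ℂ),
      P (z + 1) = P (2 * z) / 2 ^ n +
        (2 ^ (n + 1) - 2) * P (2 / z) * z ^ (n - 1) / 2 ^ (n + 1)) :
    deriv P 2 = ((2 : ℂ) ^ n - 1) * ((n : ℂ) - 1) / (3 * 2 ^ n - 4) := by
  have hP : HasDerivAt P (deriv P 2) 2 := hP2an.differentiableAt.hasDerivAt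
  set D := deriv P 2 with hDdef
  have h1 : HasDerivAt (fun z : ℂ => P (z + 1)) D 1 := by
    have hi : HasDerivAt (fun z : ℂ => z + 1) 1 1 := (hasDerivAt_id 1).add_const 1
    have h := hP
    rw [show (2:ℂ) = 1 + 1 by norm_num] at h
    have h1' : HasDerivAt (fun z : ℂ => P (z + 1)) (D * 1) 1 := HasDerivAt.comp 1 h hi
    simpa using h1'
  have h2 : HasDerivAt (fun z : ℂ => P (2 * z)) (D * 2) 1 := by
    have hi : HasDerivAt (fun z : ℂ => 2 * z) 2 1 := by
      simpa using (hasDerivAt_id (1:ℂ)).const_mul 2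
    have h := hP
    rw [show (2:ℂ) = 2 * 1 by norm_num] at h
    exact h.comp 1 hi
  have h3 : HasDerivAt (fun z : ℂ => P (2 / z)) (D * (-2)) 1 := by
    have hi : HasDerivAt (fun z : ℂ => 2 / z) (-2) 1 := by
      have := (hasDerivAt_inv (one_ne_zero (α := ℂ))).const_mul 2
      simpa [div_eq_mul_inv] using this
    have h := hP
    rw [show (2:ℂ) = 2 / 1 by norm_num] at h
    exact h.comp 1 hi
  have h4 : HasDerivAt (fun z : ℂ => z ^ (n - 1)) (((n:ℂ) - 1) * 1 ^ (n - 1 - 1)) 1 := by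
    have := hasDerivAt_pow (n - 1) (1 : ℂ)
    rwa [show (((n - 1 : ℕ)) : ℂ) = (n : ℂ) - 1 by
      rw [Nat.cast_sub hn]; norm_num] at this
  have hg : HasDerivAt (fun z : ℂ => P (2 * z) / 2 ^ n +
        (2 ^ (n + 1) - 2) * P (2 / z) * z ^ (n - 1) / 2 ^ (n + 1))
      (D * 2 / 2 ^ n +
        (((2 ^ (n + 1) - 2) * (D * (-2))) * (1:ℂ) ^ (n - 1)
          + ((2 ^ (n + 1) - 2) * P (2 / 1)) * (((n:ℂ) - 1) * 1 ^ (n - 1 - 1))) / 2 ^ (n + 1)) 1 := by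
    exact (h2.div_const _).add (((h3.const_mul _).mul h4).div_const _)
  have hEq : D = D * 2 / 2 ^ n +
        (((2 ^ (n + 1) - 2) * (D * (-2))) * (1:ℂ) ^ (n - 1)
          + ((2 ^ (n + 1) - 2) * P (2 / 1)) * (((n:ℂ) - 1) * 1 ^ (n - 1 - 1))) / 2 ^ (n + 1) := by
    have hfg : (fun z : ℂ => P (z + 1)) =ᶠ[nhds 1] (fun z : ℂ => P (2 * z) / 2 ^ n +
        (2 ^ (n + 1) - 2) * P (2 / z) * z ^ (n - 1) / 2 ^ (n + 1)) := heq
    have := hfg.deriv_eq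
    rw [h1.deriv, hg.deriv] at this
    exact this
  rw [show (2:ℂ)/1 = 2 by norm_num, hP2] at hEq
  simp only [one_pow, mul_one] at hEq
  have h2n : ((2:ℂ)) ^ n ≠ 0 := pow_ne_zero _ two_ne_zero
  have h34 : (3:ℂ) * 2 ^ n - 4 ≠ 0 := by
    have : ((3 * 2 ^ n - 4 : ℕ) : ℂ) = 3 * 2 ^ n - 4 := by
      have h4le : 4 ≤ 3 * 2 ^ n := by
        calc (4:ℕ) ≤ 3 * 2 ^ 1 := by norm_num
        _ ≤ 3 * 2 ^ n := by gcongr <;> norm_num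
      push_cast [Nat.cast_sub h4le]; ring
    rw [← this]
    have : 3 * 2 ^ n - 4 ≠ 0 := by
      have : 4 < 3 * 2 ^ n := by
        calc (4:ℕ) < 3 * 2 ^ 1 := by norm_num
        _ ≤ 3 * 2 ^ n := by gcongr <;> norm_num
      omega
    exact_mod_cast this
  rw [pow_succ] at hEq
  rw [eq_div_iff h34]
  generalize (2:ℂ) ^ n = x at hEq h2n h34 ⊢
  field_simp at hEq
  refine mul_left_cancel₀ (a := 2 * x) (by simp [h2n]) ?_
  linear_combination (2 * x) * hEq
end

section
/- Under the same hypotheses (P analytic near z=1, P(2)=1, P(z+1) = 2^{−n}P(2z) + (2^{n+1}−2)2^{−(n+1)} P(2/z) z^{n−1}), the second derivative satisfies P''(2) = (2^n−1)(n−1)(n−2)/(3(3·2^n−4)). -/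
/-- Under the same hypotheses as for `P'(2)`, the second derivative satisfies
`P''(2) = (2^n − 1)(n − 1)(n − 2)/(3(3·2^n − 4))`. -/
theorem second_deriv_P_at_two (n : ℕ) (hn : 1 ≤ n) (P : ℂ → ℂ)
    (hP1 : AnalyticAt ℂ P 1) (hP2an : AnalyticAt ℂ P 2) (hP2 : P 2 = 1)
    (heq : ∀ᶠ z in nhds (1 : ℂ),
      P (z + 1) = P (2 * z) / 2 ^ n +
        (2 ^ (n + 1) - 2) * P (2 / z) * z ^ (n - 1) / 2 ^ (n + 1)) :
    iteratedDeriv 2 P 2 =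
      ((2 : ℂ) ^ n - 1) * ((n : ℂ) - 1) * ((n : ℂ) - 2) / (3 * (3 * 2 ^ n - 4)) := by
  -- abbreviations
  set A : ℂ → ℂ := deriv P with hAdef
  set B : ℂ → ℂ := deriv A with hBdef
  -- analyticity of the derivative at 2
  have hAan : AnalyticAt ℂ A 2 := by
    have h1 := hP2an.fderiv
    exact ((ContinuousLinearMap.apply ℂ ℂ (1:ℂ)).analyticAt _).comp h1
  -- eventual differentiability
  have hPev : ∀ᶠ w in nhds (2:ℂ), DifferentiableAt ℂ P w :=
    hP2an.eventually_analyticAt.mono fun _ h => h.differentiableAt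
  have t1 : Filter.Tendsto (fun z : ℂ => 2 * z) (nhds 1) (nhds 2) := by
    have h : ContinuousAt (fun z : ℂ => 2 * z) 1 := by fun_prop
    simpa using h.tendsto
  have t2 : Filter.Tendsto (fun z : ℂ => 2 / z) (nhds 1) (nhds 2) := by
    have h : ContinuousAt (fun z : ℂ => 2 / z) 1 :=
      ContinuousAt.div continuousAt_const continuousAt_id one_ne_zero
    simpa using h.tendsto
  have ev1 : ∀ᶠ z in nhds (1:ℂ), DifferentiableAt ℂ P (2*z) := t1.eventually hPev
  have ev2 : ∀ᶠ z in nhds (1:ℂ), DifferentiableAt ℂ P (2/z) := t2.eventually hPev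
  have ev3 : ∀ᶠ z in nhds (1:ℂ), z ≠ 0 := eventually_ne_nhds one_ne_zero
  set c : ℂ := 2^(n+1) - 2 with hcdef
  set k1 : ℂ := ((n-1 : ℕ) : ℂ) with hk1def
  set k2 : ℂ := ((n-1-1 : ℕ) : ℂ) with hk2def
  -- the derivative of the right-hand side
  set G : ℂ → ℂ := fun z => A (2*z) * 2 / 2^n +
      ((c * (A (2/z) * (-2/z^2))) * z^(n-1) + (c * P (2/z)) * (k1 * z^(n-1-1))) / 2^(n+1)
    with hGdef
  have hmul : ∀ z : ℂ, HasDerivAt (fun w : ℂ => 2*w) 2 z := fun z => by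
    simpa using (hasDerivAt_id z).const_mul (2:ℂ)
  have hdiv : ∀ z : ℂ, z ≠ 0 → HasDerivAt (fun w : ℂ => 2/w) (-2/z^2) z := fun z hz => by
    have h : HasDerivAt (fun w : ℂ => 2/w) _ z := (hasDerivAt_const z (2:ℂ)).div (hasDerivAt_id z) hz
    convert h using 1
    ring
  have E2 : deriv (fun z : ℂ => P (2 * z) / 2 ^ n +
      (2 ^ (n + 1) - 2) * P (2 / z) * z ^ (n - 1) / 2 ^ (n + 1)) =ᶠ[nhds (1:ℂ)] G := by
    filter_upwards [ev1, ev2, ev3] with z hd1 hd2 hz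
    have hPa : HasDerivAt (fun w => P (2*w)) (A (2*z) * 2) z :=
      (hd1.hasDerivAt).comp z (hmul z)
    have hPb : HasDerivAt (fun w => P (2/w)) (A (2/z) * (-2/z^2)) z :=
      (hd2.hasDerivAt).comp z (hdiv z hz)
    exact ((hPa.div_const _).add
      (((hPb.const_mul c).mul (hasDerivAt_pow (n-1) z)).div_const _)).deriv
  have H0 : (fun z : ℂ => P (z + 1)) =ᶠ[nhds (1:ℂ)] (fun z => P (2 * z) / 2 ^ n +
      (2 ^ (n + 1) - 2) * P (2 / z) * z ^ (n - 1) / 2 ^ (n + 1)) := heq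
  have H1 : (fun z : ℂ => A (z + 1)) =ᶠ[nhds (1:ℂ)] G := by
    have := H0.deriv.trans E2
    have e : deriv (fun z : ℂ => P (z + 1)) = fun z => A (z + 1) :=
      funext fun z => deriv_comp_add_const P 1 z
    rwa [e] at this
  have eq1 : A 2 = G 1 := by
    have h := H1.eq_of_nhds
    norm_num at h
    convert h using 2 <;> norm_num
  -- second differentiation
  have hz1 : (1:ℂ) ≠ 0 := one_ne_zero
  have hAd : HasDerivAt A (B 2) 2 := hAan.differentiableAt.hasDerivAt
  have hPd : HasDerivAt P (A 2) 2 := hP2an.differentiableAt.hasDerivAt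
  have hAd1 : HasDerivAt A (B 2) (2*1) := by rw [mul_one]; exact hAd
  have hAd2 : HasDerivAt A (B 2) (2/1) := by rw [div_one]; exact hAd
  have hPd2 : HasDerivAt P (A 2) (2/1) := by rw [div_one]; exact hPd
  have g1 : HasDerivAt (fun w => A (2*w)) (B 2 * 2) 1 := hAd1.comp 1 (hmul 1)
  have g2 : HasDerivAt (fun w => A (2/w)) (B 2 * (-2/1^2)) 1 := hAd2.comp 1 (hdiv 1 hz1)
  have g4 : HasDerivAt (fun w => P (2/w)) (A 2 * (-2/1^2)) 1 := hPd2.comp 1 (hdiv 1 hz1)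
  have g3 : HasDerivAt (fun w : ℂ => -2/w^2) 4 1 := by
    have h : HasDerivAt (fun w : ℂ => -2/w^2) _ 1 := (hasDerivAt_const (1:ℂ) (-2:ℂ)).div (hasDerivAt_pow 2 1) (by norm_num)
    convert h using 1 <;> norm_num
  have g5 := hasDerivAt_pow (n-1) (1:ℂ)
  have g6 : HasDerivAt (fun w : ℂ => k1 * w^(n-1-1)) (k1 * (k2 * 1^(n-1-1-1))) 1 :=
    (hasDerivAt_pow (n-1-1) (1:ℂ)).const_mul k1
  have full2 := ((g1.mul_const 2).div_const ((2:ℂ)^n)).add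
    (((((g2.mul g3).const_mul c).mul g5).add ((g4.const_mul c).mul g6)).div_const ((2:ℂ)^(n+1)))
  have hDG := full2.deriv
  have H2 := H1.deriv
  have eq2 : B 2 = deriv G 1 := by
    have h := H2.eq_of_nhds
    rw [deriv_comp_add_const] at h
    norm_num at h
    exact h
  rw [show deriv G 1 = _ from hDG] at eq2
  -- clean up
  have hk1 : k1 = (n:ℂ) - 1 := by
    rw [hk1def, Nat.cast_sub hn]; norm_num
  have hkk : k1 * k2 = ((n:ℂ) - 1) * ((n:ℂ) - 2) := by
    rw [hk1def, hk2def]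
    rcases n with _ | _ | m
    · omega
    · norm_num
    · push_cast [Nat.succ_sub_one]; ring
  simp only [hGdef] at eq1
  norm_num [hP2] at eq1 eq2
  -- nonzero denominators
  have h2nat : (2:ℕ) ≤ 2^n := by
    calc (2:ℕ) = 2^1 := rfl
    _ ≤ 2^n := Nat.pow_le_pow_right (by norm_num) hn
  have hx : ((2:ℂ))^n ≠ 0 := pow_ne_zero _ two_ne_zero
  have hden : (3*(2:ℂ)^n - 4) ≠ 0 := by
    have h4 : (4:ℕ) ≤ 3*2^n := le_trans (by norm_num) (Nat.mul_le_mul_left 3 h2nat)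
    have e : (3*(2:ℂ)^n - 4) = ((3*2^n - 4 : ℕ) : ℂ) := by
      rw [Nat.cast_sub h4]; push_cast; ring
    rw [e]
    exact Nat.cast_ne_zero.mpr
      (Nat.sub_ne_zero_of_lt (lt_of_lt_of_le (by norm_num) (Nat.mul_le_mul_left 3 h2nat)))
  have hiter : iteratedDeriv 2 P 2 = B 2 := by
    rw [hBdef, hAdef]
    simp [iteratedDeriv_succ, iteratedDeriv_one]
  rw [hiter]
  rw [← hk1def] at eq2
  rw [hkk, hcdef, pow_succ, hk1] at eq2
  rw [hcdef, pow_succ, hk1] at eq1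
  field_simp at eq1 eq2 ⊢
  have key1 : ((2:ℂ)^n) * (A 2 * (3*2^n-4) - (2^n-1)*((n:ℂ)-1)) = 0 := by
    linear_combination (2:ℂ)^n * eq1
  have key2 : ((2:ℂ)^n) * (B 2 * (6*2^n) - (2*2^n-2)*(4*A 2*((n:ℂ)-1) - 4*A 2 - ((n:ℂ)-1)*((n:ℂ)-2))) = 0 := by
    linear_combination (-2*(2:ℂ)^n) * eq2
  have e1 := (mul_eq_zero.1 key1).resolve_left hx
  have e2 := (mul_eq_zero.1 key2).resolve_left hx
  have h6x : (6:ℂ)*2^n ≠ 0 := by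
    simp [hx]
  have e1v : A 2 = ((2:ℂ)^n-1)*((n:ℂ)-1)/(3*2^n-4) := by
    rw [eq_div_iff hden]; linear_combination e1
  have e2v : B 2 = (2*(2:ℂ)^n-2)*(4*A 2*((n:ℂ)-1) - 4*A 2 - ((n:ℂ)-1)*((n:ℂ)-2)) / (6*2^n) := by
    rw [eq_div_iff h6x]; linear_combination e2
  rw [e2v, e1v]
  have hden' : (2:ℂ)^n*3 - 4 ≠ 0 := by rw [mul_comm]; exact hden
  field_simp
  ring
end

section
/- Define D_ℓ(n) recursively by D_0(n)=1 and D_ℓ(n) = ((2^n−1)/(2^n·A_ℓ)) · Σ_{i=0}^{ℓ−1} D_i(n)(−1)^i 2^i C(ℓ,i), where A_ℓ = 1−2^ℓ if ℓ is even and A_ℓ = 2^ℓ+1−2^{ℓ+1−n} if ℓ is odd. If P is analytic near z=1 with P(2)=1 satisfying P(z+1)=2^{−n}P(2z)+(2^{n+1}−2)2^{−(n+1)}P(2/z)z^{n−1}, then for all ℓ ≤ n−1, the ℓ-th derivative P^{(ℓ)}(2) = (n−1)!/(n−ℓ−1)! · D_ℓ(n), and P^{(ℓ)}(2)=0 for ℓ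 ≥ n; in particular P is a polynomial of degree at most n−1. -/
open Finset in
/-- `A_ℓ` from the recursion: `1 − 2^ℓ` for even `ℓ`, `2^ℓ + 1 − 2^{ℓ+1−n}` for odd `ℓ`. -/
noncomputable def gkwA (n ℓ : ℕ) : ℂ :=
  if Even ℓ then 1 - 2 ^ ℓ else 2 ^ ℓ + 1 - 2 ^ (ℓ + 1) / 2 ^ n

open Finset in
/-- The coefficients `D_ℓ(n)`: `D_0 = 1` and
`D_ℓ = ((2^n−1)/(2^n A_ℓ)) Σ_{i<ℓ} D_i (−1)^i 2^i C(ℓ,i)`. -/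
noncomputable def gkwD (n : ℕ) : ℕ → ℂ
  | 0 => 1
  | (ℓ + 1) =>
      ((2 ^ n - 1) / (2 ^ n * gkwA n (ℓ + 1))) *
        ∑ i ∈ (Finset.range (ℓ + 1)).attach,
          gkwD n i.1 * (-1) ^ i.1 * 2 ^ i.1 * ((ℓ + 1).choose i.1 : ℂ)
  decreasing_by exact Finset.mem_range.mp i.2

open Finset Filter

private lemma gkw_two_pow_ne (k : ℕ) : (2:ℂ)^k ≠ 0 := pow_ne_zero _ two_ne_zero

private lemma gkwA_ne_zero {n m : ℕ} (hn : 1 ≤ n) (hm : 1 ≤ m) : gkwA n m ≠ 0 := by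
  unfold gkwA
  split_ifs with h
  · have : ((1 - 2^m : ℝ) : ℂ) = 1 - 2^m := by push_cast; ring
    rw [← this, Complex.ofReal_ne_zero]
    have : (2:ℝ) ≤ 2^m := by
      calc (2:ℝ) = 2^1 := (pow_one 2).symm
      _ ≤ 2^m := pow_le_pow_right₀ one_le_two hm
    linarith
  · have : ((2^m + 1 - 2^(m+1)/2^n : ℝ) : ℂ) = 2^m + 1 - 2^(m+1)/2^n := by push_cast; ring
    rw [← this, Complex.ofReal_ne_zero]
    have h1 : (2:ℝ)^(m+1)/2^n ≤ 2^m := by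
      rw [div_le_iff₀ (by positivity)]
      rw [← pow_add]
      exact pow_le_pow_right₀ one_le_two (by omega)
    have : (0:ℝ) < 2^m := by positivity
    linarith

private lemma gkw_factor_eq (n m : ℕ) :
    (1:ℂ) - 2^m/2^n - ((2^n-1)/2^n) * (-2)^m = gkwA n m := by
  unfold gkwA
  rcases Nat.even_or_odd m with h | h
  · rw [if_pos h, h.neg_pow]
    field_simp
    ring
  · rw [if_neg (Nat.not_even_iff_odd.mpr h), h.neg_pow]
    field_simp
    ring

private lemma gkw_c_eq (n : ℕ) : ((2:ℂ)^(n+1) - 2)/2^(n+1) = (2^n-1)/2^n := by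
  have h1 : (2:ℂ)^(n+1) ≠ 0 := gkw_two_pow_ne _
  have h2 : (2:ℂ)^n ≠ 0 := gkw_two_pow_ne _
  field_simp
  ring

private lemma gkwD_succ (n ℓ : ℕ) :
    gkwD n (ℓ+1) = ((2^n-1)/2^n) / gkwA n (ℓ+1) *
      ∑ i ∈ range (ℓ+1), gkwD n i * (-1)^i * 2^i * ((ℓ+1).choose i : ℂ) := by
  rw [gkwD, div_div,
    Finset.sum_attach (range (ℓ+1)) (fun i => gkwD n i * (-1)^i * 2^i * ((ℓ+1).choose i : ℂ))]


private lemma gkwD_zero (n : ℕ) : gkwD n 0 = 1 := by rw [gkwD]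

private lemma gkwA_zero (n : ℕ) : gkwA n 0 = 0 := by simp [gkwA]

noncomputable def gkwQ (n k : ℕ) : ℂ := ((n-1).choose k : ℂ) * gkwD n k

private lemma gkw_key {n : ℕ} (hn : 1 ≤ n) {m : ℕ} (hm : m < n) :
    gkwQ n m * (1 - 2^m/2^n) =
      ((2^n-1)/2^n) * ∑ k ∈ range (m+1),
        gkwQ n k * (-2)^k * ((n-1-k).choose (m-k) : ℂ) := by
  set c : ℂ := (2^n-1)/2^n with hc
  rw [Finset.sum_range_succ]
  have hmm : (n-1-m).choose (m-m) = 1 := by simp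
  rw [hmm]
  have key2 : gkwQ n m * gkwA n m = c * ∑ k ∈ range m,
      gkwQ n k * (-2)^k * ((n-1-k).choose (m-k) : ℂ) := by
    rcases m with _ | ℓ
    · simp [gkwA_zero]
    · have hA := gkwA_ne_zero hn (Nat.succ_le_succ (Nat.zero_le ℓ))
      rw [gkwQ, gkwD_succ, mul_comm (c / gkwA n (ℓ+1)) _, mul_assoc, mul_assoc,
        div_mul_cancel₀ _ hA]
      rw [Finset.sum_mul, Finset.mul_sum, Finset.mul_sum]
      apply Finset.sum_congr rfl
      intro k hk
      have hk' : k < ℓ + 1 := Finset.mem_range.mp hk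
      have hcn : (n-1).choose (ℓ+1) * (ℓ+1).choose k
          = (n-1).choose k * (n-1-k).choose (ℓ+1-k) :=
        Nat.choose_mul (by omega)
      have : ((n-1).choose (ℓ+1) : ℂ) * (ℓ+1).choose k
          = ((n-1).choose k : ℂ) * (n-1-k).choose (ℓ+1-k) := by
        exact_mod_cast congrArg (Nat.cast (R := ℂ)) hcn
      rw [gkwQ]
      have hneg : ((-2:ℂ))^k = (-1)^k * 2^k := by rw [neg_pow]
      calc ((n-1).choose (ℓ+1) : ℂ) * (gkwD n k * (-1)^k * 2^k * ((ℓ+1).choose k : ℂ) * c)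
          = c * ((((n-1).choose (ℓ+1) : ℂ) * (ℓ+1).choose k) * (gkwD n k * ((-1)^k * 2^k))) := by ring
        _ = c * ((((n-1).choose k : ℂ) * (n-1-k).choose (ℓ+1-k)) * (gkwD n k * ((-1)^k * 2^k))) := by
            rw [this]
        _ = c * (((n-1).choose k : ℂ) * gkwD n k * (-2)^k * ((n-1-k).choose (ℓ+1-k) : ℂ)) := by
            rw [hneg]; ring
  have := gkw_factor_eq n m
  calc gkwQ n m * (1 - 2^m/2^n)
      = gkwQ n m * gkwA n m + c * (gkwQ n m * (-2)^m) := by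
        rw [← this]; ring
    _ = _ := by rw [key2]; push_cast; ring

private lemma gkw_tri (n : ℕ) (f : ℕ → ℕ → ℂ) :
    ∑ k ∈ range n, ∑ j ∈ range (n - k), f k (k + j)
      = ∑ m ∈ range n, ∑ k ∈ range (m+1), f k m := by
  rw [Finset.sum_sigma' (range n) (fun k => range (n - k)) (fun k j => f k (k + j)),
    Finset.sum_sigma' (range n) (fun m => range (m+1)) (fun m k => f k m)]
  apply Finset.sum_nbij' (fun x => (⟨x.1 + x.2, x.1⟩ : Σ _ : ℕ, ℕ))
    (fun x => (⟨x.2, x.1 - x.2⟩ : Σ _ : ℕ, ℕ))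
  · rintro ⟨k, j⟩ h
    simp only [Finset.mem_sigma, Finset.mem_range] at h ⊢
    omega
  · rintro ⟨m, k⟩ h
    simp only [Finset.mem_sigma, Finset.mem_range] at h ⊢
    omega
  · rintro ⟨k, j⟩ h
    simp
  · rintro ⟨m, k⟩ h
    simp only [Finset.mem_sigma, Finset.mem_range] at h
    simp only [Sigma.mk.inj_iff, heq_eq_eq]
    constructor
    · omega
    · trivial
  · rintro ⟨k, j⟩ h
    simp

private lemma gkw_core {n : ℕ} (hn : 1 ≤ n) (u : ℂ) :
    ∑ k ∈ range n, gkwQ n k * u^k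
      = (∑ k ∈ range n, gkwQ n k * (2*u)^k)/2^n
        + ((2^n-1)/2^n) * ∑ k ∈ range n, gkwQ n k * (-2*u)^k * (1+u)^(n-1-k) := by
  have h3 : ∑ k ∈ range n, gkwQ n k * (-2*u)^k * (1+u)^(n-1-k)
      = ∑ m ∈ range n, (∑ k ∈ range (m+1),
          gkwQ n k * (-2)^k * ((n-1-k).choose (m-k) : ℂ)) * u^m := by
    calc ∑ k ∈ range n, gkwQ n k * (-2*u)^k * (1+u)^(n-1-k)
        = ∑ k ∈ range n, ∑ j ∈ range (n - k),
            gkwQ n k * (-2)^k * ((n-1-k).choose ((k+j)-k) : ℂ) * u^(k+j) := by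
          apply Finset.sum_congr rfl
          intro k hk
          have hk' : k < n := Finset.mem_range.mp hk
          have hnk : n - 1 - k + 1 = n - k := by omega
          rw [add_comm (1:ℂ) u, add_pow, ← hnk]
          rw [Finset.mul_sum]
          apply Finset.sum_congr rfl
          intro j hj
          have : (k+j) - k = j := by omega
          rw [this, mul_pow, one_pow, pow_add]
          ring
      _ = ∑ m ∈ range n, ∑ k ∈ range (m+1),
            gkwQ n k * (-2)^k * ((n-1-k).choose (m-k) : ℂ) * u^m :=
          gkw_tri n (fun k m => gkwQ n k * (-2)^k * ((n-1-k).choose (m-k) : ℂ) * u^m)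
      _ = _ := by
          apply Finset.sum_congr rfl
          intro m _
          rw [Finset.sum_mul]
  rw [h3, Finset.sum_div, Finset.mul_sum]
  rw [← Finset.sum_add_distrib]
  apply Finset.sum_congr rfl
  intro m hm
  have key := gkw_key hn (Finset.mem_range.mp hm)
  have h2n : (2:ℂ)^n ≠ 0 := pow_ne_zero _ two_ne_zero
  rw [mul_pow]
  linear_combination (u^m) * key

private lemma gkw_entire_zero {n : ℕ} (hn : 1 ≤ n) (h : ℂ → ℂ)
    (hd : Differentiable ℂ h) (h2 : h 2 = 0)
    (heq : ∀ᶠ z in nhds (1 : ℂ),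
      h (z + 1) = h (2 * z) / 2 ^ n +
        (2 ^ (n + 1) - 2) * h (2 / z) * z ^ (n - 1) / 2 ^ (n + 1)) :
    ∀ z, h z = 0 := by
  have hA : AnalyticAt ℂ h 2 := hd.analyticAt 2
  suffices hev : ∀ᶠ z in nhds (2:ℂ), h z = 0 by
    intro z
    have hAn : AnalyticOnNhd ℂ h Set.univ := fun x _ => hd.analyticAt x
    exact hAn.eqOn_zero_of_preconnected_of_eventuallyEq_zero isPreconnected_univ
      (Set.mem_univ 2) (hev.mono fun x hx => by simpa using hx) (Set.mem_univ z)
  rcases eq_or_ne (analyticOrderAt h 2) ⊤ with htop | hne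
  · exact analyticOrderAt_eq_top.mp htop
  · exfalso
    obtain ⟨m, hm⟩ := WithTop.ne_top_iff_exists.mp hne
    obtain ⟨g, hg_an, hg_ne, hg_eq⟩ := (hA.analyticOrderAt_eq_natCast (n := m)).mp hm.symm
    simp only [smul_eq_mul] at hg_eq
    -- m ≥ 1
    have hm1 : 1 ≤ m := by
      rcases Nat.eq_zero_or_pos m with h0 | h1
      · exfalso
        have := hg_eq.self_of_nhds
        rw [h0] at this
        simp [h2] at this
        exact hg_ne this.symm
      · exact h1
    -- pull back the functional equation to w near 0
    have t1 : Tendsto (fun w : ℂ => w + 1) (nhds 0) (nhds 1) := by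
      have : ContinuousAt (fun w : ℂ => w + 1) 0 := by fun_prop
      simpa using this.tendsto
    have e1 := t1.eventually heq
    have t2 : Tendsto (fun w : ℂ => w + 1 + 1) (nhds 0) (nhds 2) := by
      have : ContinuousAt (fun w : ℂ => w + 1 + 1) 0 := by fun_prop
      have := this.tendsto
      norm_num at this
      exact this
    have e2 := t2.eventually hg_eq
    have t3 : Tendsto (fun w : ℂ => 2 * (w + 1)) (nhds 0) (nhds 2) := by
      have : ContinuousAt (fun w : ℂ => 2 * (w + 1)) 0 := by fun_prop
      have := this.tendsto
      norm_num at this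
      exact this
    have e3 := t3.eventually hg_eq
    have t4 : Tendsto (fun w : ℂ => 2 / (w + 1)) (nhds 0) (nhds 2) := by
      have : ContinuousAt (fun w : ℂ => 2 / (w + 1)) 0 := by
        apply ContinuousAt.div
        · fun_prop
        · fun_prop
        · norm_num
      have := this.tendsto
      norm_num at this
      exact this
    have e4 := t4.eventually hg_eq
    have e5 : ∀ᶠ w in nhds (0:ℂ), w + 1 ≠ 0 := by
      have hc : ContinuousAt (fun w : ℂ => w + 1) 0 := by fun_prop
      exact hc.eventually_ne (by norm_num)
    set Φ : ℂ → ℂ := fun w => g (w+1+1) - 2^m * g (2*(w+1))/2^n -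
        (2^(n+1)-2) * (-2)^m * g (2/(w+1)) * (w+1)^(n-1) / (w+1)^m / 2^(n+1) with hΦ
    have hΦ0 : ∀ᶠ w in nhdsWithin (0:ℂ) {(0:ℂ)}ᶜ, Φ w = 0 := by
      have hmem : ∀ᶠ w in nhdsWithin (0:ℂ) {(0:ℂ)}ᶜ, w ≠ 0 := by
        filter_upwards [eventually_mem_nhdsWithin] with w hw
        simpa using hw
      have big := (e1.and (e2.and (e3.and (e4.and e5)))).filter_mono
        (nhdsWithin_le_nhds (s := {(0:ℂ)}ᶜ))
      filter_upwards [big, hmem] with w hw hw0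
      obtain ⟨A, B, C, D, E5⟩ := hw
      have hw1 : w + 1 ≠ 0 := E5
      have hwm : w^m ≠ 0 := pow_ne_zero _ hw0
      have hB : h (w+1+1) = w^m * g (w+1+1) := by
        have : w + 1 + 1 - 2 = w := by ring
        rw [B, this]
      have hC : h (2*(w+1)) = (2*w)^m * g (2*(w+1)) := by
        have : 2*(w+1) - 2 = 2*w := by ring
        rw [C, this]
      have hD : h (2/(w+1)) = ((-2)*w/(w+1))^m * g (2/(w+1)) := by
        have : 2/(w+1) - 2 = (-2)*w/(w+1) := by field_simp; ring
        rw [D, this]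
      have hDpow : ((-2)*w/(w+1))^m = (-2)^m * w^m / (w+1)^m := by
        rw [div_pow, mul_pow]
      have A' : w^m * g (w+1+1) = 2^m * w^m * g (2*(w+1))/2^n +
          (2^(n+1)-2) * ((-2)^m * w^m / (w+1)^m) * g (2/(w+1)) * (w+1)^(n-1)/2^(n+1) := by
        have := A
        rw [hB, hC, hD, hDpow] at this
        rw [this, mul_pow]
        ring
      have hcancel : Φ w * w^m = 0 := by
        have h2n : (2:ℂ)^n ≠ 0 := pow_ne_zero _ two_ne_zero
        have h2n1 : (2:ℂ)^(n+1) ≠ 0 := pow_ne_zero _ two_ne_zero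
        have hw1m : (w+1)^m ≠ 0 := pow_ne_zero _ hw1
        rw [hΦ]
        linear_combination A'
      rcases mul_eq_zero.mp hcancel with h' | h'
      · exact h'
      · exact absurd h' hwm
    have hΦc : ContinuousAt Φ 0 := by
      have hgc : ContinuousAt g 2 := hg_an.continuousAt
      have c1 : ContinuousAt (fun w : ℂ => g (w+1+1)) 0 := by
        apply ContinuousAt.comp (x := (0:ℂ)) (g := g)
        · rw [show (0:ℂ)+1+1 = 2 by norm_num]; exact hgc
        · fun_prop
      have c2 : ContinuousAt (fun w : ℂ => g (2*(w+1))) 0 := by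
        apply ContinuousAt.comp (x := (0:ℂ)) (g := g)
        · rw [show 2*((0:ℂ)+1) = 2 by norm_num]; exact hgc
        · fun_prop
      have c3 : ContinuousAt (fun w : ℂ => g (2/(w+1))) 0 := by
        apply ContinuousAt.comp (x := (0:ℂ)) (g := g)
        · rw [show 2/((0:ℂ)+1) = 2 by norm_num]; exact hgc
        · apply ContinuousAt.div
          · fun_prop
          · fun_prop
          · norm_num
      have c4 : ContinuousAt (fun w : ℂ => (w+1)^(n-1)) 0 := by fun_prop
      have c5 : ContinuousAt (fun w : ℂ => (w+1)^m) 0 := by fun_prop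
      have hd1 : ((0:ℂ)+1)^m ≠ 0 := by norm_num
      rw [hΦ]
      exact (c1.sub ((continuousAt_const.mul c2).div continuousAt_const
          (pow_ne_zero _ two_ne_zero))).sub
        ((((continuousAt_const.mul c3).mul c4).div c5 hd1).div continuousAt_const
          (pow_ne_zero _ two_ne_zero))
    -- conclude Φ 0 = 0
    have hΦ00 : Φ 0 = 0 := by
      have l1 : Tendsto Φ (nhdsWithin (0:ℂ) {(0:ℂ)}ᶜ) (nhds (Φ 0)) :=
        hΦc.continuousWithinAt
      have l2 : Tendsto Φ (nhdsWithin (0:ℂ) {(0:ℂ)}ᶜ) (nhds 0) :=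
        Tendsto.congr' (by filter_upwards [hΦ0] with w hw; exact hw.symm) tendsto_const_nhds
      exact tendsto_nhds_unique l1 l2
    -- extract contradiction
    have hval : g 2 * gkwA n m = 0 := by
      rw [hΦ] at hΦ00
      simp only [zero_add, one_pow, one_mul] at hΦ00
      norm_num at hΦ00
      rw [← gkw_factor_eq n m, ← gkw_c_eq n]
      linear_combination hΦ00
    rcases mul_eq_zero.mp hval with h' | h'
    · exact hg_ne h'
    · exact gkwA_ne_zero hn hm1 h'

private lemma gkw_iteratedDeriv (n : ℕ) (q : ℕ → ℂ) (ℓ : ℕ) :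
    iteratedDeriv ℓ (fun z : ℂ => ∑ k ∈ range n, q k * (z - 2)^k)
      = fun z => ∑ k ∈ range n, q k * (k.descFactorial ℓ : ℂ) * (z - 2)^(k - ℓ) := by
  induction ℓ with
  | zero => simp
  | succ ℓ ih =>
    rw [iteratedDeriv_succ, ih]
    funext z
    have hterm : ∀ k, HasDerivAt (fun z : ℂ => q k * (k.descFactorial ℓ : ℂ) * (z - 2)^(k - ℓ))
        (q k * (k.descFactorial ℓ : ℂ) * ((k - ℓ : ℕ) * (z - 2)^(k - ℓ - 1))) z := by
      intro k
      have h1 : HasDerivAt (fun z : ℂ => (z - 2)^(k - ℓ))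
          ((k-ℓ : ℕ) * (z - 2)^(k - ℓ - 1) * 1) z :=
        ((hasDerivAt_id z).sub_const 2).pow (k - ℓ)
      rw [mul_one] at h1
      exact h1.const_mul _
    have hsum : HasDerivAt (fun z : ℂ => ∑ k ∈ range n, q k * (k.descFactorial ℓ : ℂ) * (z - 2)^(k - ℓ))
        (∑ k ∈ range n, q k * (k.descFactorial ℓ : ℂ) * ((k - ℓ : ℕ) * (z - 2)^(k - ℓ - 1))) z :=
      HasDerivAt.fun_sum (fun k _ => hterm k)
    rw [hsum.deriv]
    apply Finset.sum_congr rfl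
    intro k _
    rw [Nat.descFactorial_succ]
    have h2 : k - ℓ - 1 = k - (ℓ + 1) := by omega
    rw [h2]
    push_cast
    ring

private lemma gkw_eval (n : ℕ) (q : ℕ → ℂ) (ℓ : ℕ) :
    iteratedDeriv ℓ (fun z : ℂ => ∑ k ∈ range n, q k * (z - 2)^k) 2
      = if ℓ < n then q ℓ * (Nat.factorial ℓ : ℂ) else 0 := by
  rw [gkw_iteratedDeriv]
  show ∑ k ∈ range n, q k * (k.descFactorial ℓ : ℂ) * ((2:ℂ) - 2) ^ (k - ℓ) = _
  have h22 : (2:ℂ) - 2 = 0 := by ring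
  split_ifs with h
  · rw [Finset.sum_eq_single ℓ]
    · rw [Nat.descFactorial_self, h22, Nat.sub_self, pow_zero, mul_one]
    · intro k hk hkne
      rcases lt_or_gt_of_ne hkne with hlt | hgt
      · rw [Nat.descFactorial_eq_zero_iff_lt.mpr hlt]
        simp
      · rw [h22, zero_pow (by omega)]
        ring
    · intro hℓ
      exact absurd (Finset.mem_range.mpr h) hℓ
  · apply Finset.sum_eq_zero
    intro k hk
    have hkl : k < ℓ := by
      have := Finset.mem_range.mp hk
      omega
    rw [Nat.descFactorial_eq_zero_iff_lt.mpr hkl]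
    simp

private lemma gkw_F_eq {n : ℕ} (hn : 1 ≤ n) (z : ℂ) (hz : z ≠ 0) :
    ∑ k ∈ range n, gkwQ n k * (z + 1 - 2)^k
      = (∑ k ∈ range n, gkwQ n k * (2*z - 2)^k)/2^n
        + (2^(n+1) - 2) * (∑ k ∈ range n, gkwQ n k * (2/z - 2)^k) * z^(n-1)/2^(n+1) := by
  have core := gkw_core hn (z - 1)
  have e1 : ∀ k : ℕ, (z + 1 - 2)^k = (z - 1)^k := by intro k; ring_nf
  have e2 : ∀ k : ℕ, (2*z - 2)^k = (2*(z-1))^k := by intro k; ring_nf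
  have e3 : (∑ k ∈ range n, gkwQ n k * (2/z - 2)^k) * z^(n-1)
      = ∑ k ∈ range n, gkwQ n k * (-2*(z-1))^k * (1+(z-1))^(n-1-k) := by
    rw [Finset.sum_mul]
    apply Finset.sum_congr rfl
    intro k hk
    have hk' : k < n := Finset.mem_range.mp hk
    have hzz : 2/z - 2 = -2*(z-1)/z := by field_simp; ring
    have h1z : (1:ℂ) + (z - 1) = z := by ring
    have hsplit : z^(n-1) = z^(n-1-k) * z^k := by
      rw [← pow_add]
      congr 1
      omega
    have hzk : z^k ≠ 0 := pow_ne_zero _ hz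
    rw [hzz, h1z, div_pow, hsplit]
    field_simp
  calc ∑ k ∈ range n, gkwQ n k * (z + 1 - 2)^k
      = ∑ k ∈ range n, gkwQ n k * (z-1)^k := by
        exact Finset.sum_congr rfl fun k _ => by rw [e1]
    _ = (∑ k ∈ range n, gkwQ n k * (2*(z-1))^k)/2^n
        + ((2^n-1)/2^n) * ∑ k ∈ range n, gkwQ n k * (-2*(z-1))^k * (1+(z-1))^(n-1-k) := core
    _ = _ := by
        rw [← e3, ← gkw_c_eq n]
        congr 1
        · congr 1
          exact Finset.sum_congr rfl fun k _ => by rw [e2]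
        · ring

/-- If `P` is entire with `P 2 = 1` and satisfies
`P(z+1) = 2^{-n}P(2z) + (2^{n+1}−2)2^{-(n+1)}P(2/z)z^{n-1}` near `z = 1`, then
`P^{(ℓ)}(2) = (n−1)!/(n−ℓ−1)! · D_ℓ(n)` for `ℓ ≤ n−1`, all derivatives of order `≥ n`
vanish at `2`, and `P` is a polynomial of degree at most `n − 1`. -/
theorem P_derivatives_and_polynomial (n : ℕ) (hn : 1 ≤ n) (P : ℂ → ℂ)
    (hP : Differentiable ℂ P) (hP2 : P 2 = 1)
    (heq : ∀ᶠ z in nhds (1 : ℂ),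
      P (z + 1) = P (2 * z) / 2 ^ n +
        (2 ^ (n + 1) - 2) * P (2 / z) * z ^ (n - 1) / 2 ^ (n + 1)) :
    (∀ ℓ, ℓ ≤ n - 1 →
        iteratedDeriv ℓ P 2 =
          ((Nat.factorial (n - 1) : ℂ) / (Nat.factorial (n - ℓ - 1) : ℂ)) * gkwD n ℓ) ∧
    (∀ ℓ, n ≤ ℓ → iteratedDeriv ℓ P 2 = 0) ∧
    (∃ q : Polynomial ℂ, q.natDegree ≤ n - 1 ∧ ∀ z : ℂ, P z = q.eval z) := by
  set F : ℂ → ℂ := fun z => ∑ k ∈ range n, gkwQ n k * (z - 2)^k with hF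
  have hFd : Differentiable ℂ F := by
    apply Differentiable.fun_sum
    intro k _
    exact ((differentiable_id.sub_const 2).pow k).const_mul _
  have hF2 : F 2 = 1 := by
    rw [hF]
    simp only []
    rw [Finset.sum_eq_single 0]
    · simp [gkwQ, gkwD_zero]
    · intro k hk hkne
      rw [show (2:ℂ)-2 = 0 by ring, zero_pow hkne]
      ring
    · intro h0
      exact absurd (Finset.mem_range.mpr (by omega)) h0
  have hz_ne : ∀ᶠ z in nhds (1:ℂ), z ≠ 0 := continuousAt_id.eventually_ne (by norm_num)
  have heq_h : ∀ᶠ z in nhds (1 : ℂ),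
      (P (z+1) - F (z+1)) = (P (2*z) - F (2*z)) / 2 ^ n +
        (2 ^ (n + 1) - 2) * (P (2/z) - F (2/z)) * z ^ (n - 1) / 2 ^ (n + 1) := by
    filter_upwards [heq, hz_ne] with z h1 h2
    have hFz := gkw_F_eq (n := n) hn z h2
    simp only [hF]
    linear_combination h1 - hFz
  have hzero := gkw_entire_zero hn (fun z => P z - F z) (hP.sub hFd) (by simp [hP2, hF2]) heq_h
  have hPF : P = F := by
    funext z
    have := hzero z
    exact sub_eq_zero.mp this
  refine ⟨?_, ?_, ?_⟩
  · intro ℓ hℓ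
    have hℓn : ℓ < n := by omega
    rw [hPF, hF, gkw_eval, if_pos hℓn]
    have hnat : (n-1).choose ℓ * ℓ.factorial * (n-1-ℓ).factorial = (n-1).factorial :=
      Nat.choose_mul_factorial_mul_factorial (by omega)
    have hne : ((n-1-ℓ).factorial : ℂ) ≠ 0 := Nat.cast_ne_zero.mpr (Nat.factorial_ne_zero _)
    have hfac : (((n-1).choose ℓ : ℂ)) * (ℓ.factorial : ℂ)
        = ((n-1).factorial : ℂ) / ((n-1-ℓ).factorial : ℂ) := by
      rw [eq_div_iff hne]
      exact_mod_cast hnat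
    rw [show n - ℓ - 1 = n - 1 - ℓ by omega, gkwQ, ← hfac]
    ring
  · intro ℓ hℓ
    rw [hPF, hF, gkw_eval, if_neg (by omega)]
  · refine ⟨∑ k ∈ range n, Polynomial.C (gkwQ n k) * (Polynomial.X - Polynomial.C 2)^k,
      ?_, ?_⟩
    · apply Polynomial.natDegree_sum_le_of_forall_le
      intro k hk
      refine le_trans (Polynomial.natDegree_C_mul_le _ _) ?_
      rw [Polynomial.natDegree_pow, Polynomial.natDegree_X_sub_C, mul_one]
      have := Finset.mem_range.mp hk
      omega
    · intro z
      rw [hPF, hF]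
      simp [Polynomial.eval_finset_sum]
end

section
/- The operator L₀ defined on functions analytic in a neighborhood of [0,1] by L₀[f](x) = (x+1)^{−2} f(1/(x+1)) has eigenvalues (−1)^n φ^{−2n−2} for n = 0,1,2,…, where φ = (1+√5)/2; concretely, for each n there is a nonzero analytic eigenfunction f_n with L₀ f_n = (−1)^n φ^{−2n−2} f_n. -/
open Real in
/-- The operator `L₀[f](x) = (x+1)⁻² f(1/(x+1))` on functions analytic on a
neighborhood of `[0,1]` has, for each `n`, a nonzero analytic eigenfunction with
eigenvalue `(−1)ⁿ φ^{−2n−2}`, where `φ = (1+√5)/2`. -/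
theorem L0_eigenvalues (n : ℕ) :
    ∃ f : ℝ → ℝ, AnalyticOnNhd ℝ f (Set.Icc (0 : ℝ) 1) ∧
      (∃ x ∈ Set.Icc (0 : ℝ) 1, f x ≠ 0) ∧
      ∀ x ∈ Set.Icc (0 : ℝ) 1,
        ((x + 1) ^ 2)⁻¹ * f (1 / (x + 1)) =
          (-1) ^ n * (((1 + Real.sqrt 5) / 2) ^ (2 * n + 2))⁻¹ * f x := by
  set φ : ℝ := (1 + Real.sqrt 5) / 2 with hφdef
  have hs : Real.sqrt 5 ^ 2 = 5 := Real.sq_sqrt (by norm_num)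
  have hs1 : 1 < Real.sqrt 5 := by nlinarith [Real.sqrt_nonneg 5]
  have hφ1 : 1 < φ := by rw [hφdef]; linarith
  have hφ0 : φ ≠ 0 := by linarith
  have hφ2 : φ ^ 2 = φ + 1 := by rw [hφdef]; field_simp; nlinarith
  refine ⟨fun x => (x - φ⁻¹) ^ n / (x + φ) ^ (n + 2), ?_, ?_, ?_⟩
  · intro x hx
    have hd : (x + φ) ^ (n + 2) ≠ 0 := by
      have : 0 < x + φ := by have := hx.1; linarith
      positivity
    exact (((analyticAt_id.sub analyticAt_const).pow n).div
      ((analyticAt_id.add analyticAt_const).pow (n + 2)) hd)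
  · refine ⟨1, by norm_num, ?_⟩
    have h1 : φ⁻¹ < 1 := by
      rw [inv_lt_one_iff₀]; right; exact hφ1
    have hnum : (1 - φ⁻¹) ^ n ≠ 0 :=
      pow_ne_zero n (ne_of_gt (by linarith : (0:ℝ) < 1 - φ⁻¹))
    have hden : ((1:ℝ) + φ) ^ (n + 2) ≠ 0 := by positivity
    exact div_ne_zero hnum hden
  · intro x hx
    have hx0 := hx.1
    have hx1 : (0:ℝ) < x + 1 := by linarith
    have hx1' : x + 1 ≠ 0 := ne_of_gt hx1
    have hb : (0:ℝ) < x + φ := by linarith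
    have hb' : x + φ ≠ 0 := ne_of_gt hb
    have hA : 1 / (x + 1) - φ⁻¹ = -φ⁻¹ * (x - φ⁻¹) / (x + 1) := by
      field_simp
      linear_combination ((x + 1) * φ) * hφ2 + ((1 - x) / 8 - (1 + x) * Real.sqrt 5 / 8) * hs
    have hB : 1 / (x + 1) + φ = φ * (x + φ) / (x + 1) := by
      field_simp
      linear_combination hφ2 - hs / 2
    beta_reduce
    rw [hA, hB]
    rw [div_pow, div_pow, mul_pow, mul_pow, neg_pow, inv_pow]
    field_simp
    ring
end
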